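/- Let p, q be positive integers, let B be a real p×q matrix such that the linear map x ↦ B·x on ℝ^q has trivial kernel, let Φ be an invertible real q×q matrix, let Ψ and 𝒜uu be real q×q matrices, and let 𝒜uσ be a real q×p matrix. Set 𝒜σσ := B·Φ·𝒜uσ and 𝒜σu := B·Ψ. Suppose the vectors σ, σ* ∈ ℝ^p and u, u* ∈ ℝ^q satisfy the first component of the upwind-flux equality, namely B·u* = B·u + 𝒜σσ·(σ − σ*) + 𝒜σu·(u − u*). Then, with the stabilization matrix T := −(Φᵀ·Bᵀ·B·Φ)⁻¹·Φᵀ·Bᵀ·B·(Ψ + I) + 𝒜uu, one has 𝒜uσ·(σ − σ*) + 𝒜uu·(u − u*) = T·(u − u*). In particular, the second component of the upwind numerical flux, Bᵀσ + C·u + 𝒜uσ·(σ − σ*) + 𝒜uu·(u − u*), equals the reduced form Bᵀσ + C·u + T·(u − u*). -/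
import Mathlib


open Matrix

/-- Reduced upwind flux for two-field Friedrichs' systems under assumption (F1). -/
theorem reduced_upwind_flux (p q : ℕ) (hp : 0 < p) (hq : 0 < q)
    (B : Matrix (Fin p) (Fin q) ℝ)
    (hB : ∀ x : Fin q → ℝ, B.mulVec x = 0 → x = 0)
    (Φ Ψ Auu : Matrix (Fin q) (Fin q) ℝ) (hΦ : IsUnit Φ)
    (Auσ : Matrix (Fin q) (Fin p) ℝ)
    (σ σs : Fin p → ℝ) (u us : Fin q → ℝ)
    (hflux : B.mulVec us =
      B.mulVec u + (B * Φ * Auσ).mulVec (σ - σs) + (B * Ψ).mulVec (u - us)) :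
    Auσ.mulVec (σ - σs) + Auu.mulVec (u - us) =
      (-((Φᵀ * Bᵀ * B * Φ)⁻¹ * (Φᵀ * Bᵀ * B * (Ψ + 1))) + Auu).mulVec (u - us) ∧
    ∀ C : Matrix (Fin q) (Fin q) ℝ,
      Bᵀ.mulVec σ + C.mulVec u + Auσ.mulVec (σ - σs) + Auu.mulVec (u - us) =
      Bᵀ.mulVec σ + C.mulVec u +
        (-((Φᵀ * Bᵀ * B * Φ)⁻¹ * (Φᵀ * Bᵀ * B * (Ψ + 1))) + Auu).mulVec (u - us) := by
  set w := σ - σs with hw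
  set v := u - us with hv
  have hdet : IsUnit Φ.det := (Matrix.isUnit_iff_isUnit_det Φ).mp hΦ
  -- M := ΦᵀBᵀBΦ is a unit
  have hassoc : Φᵀ * Bᵀ * B * Φ = (B * Φ)ᵀ * (B * Φ) := by
    rw [transpose_mul, Matrix.mul_assoc]
  have hM : IsUnit (Φᵀ * Bᵀ * B * Φ) := by
    rw [hassoc, ← Matrix.mulVec_injective_iff_isUnit]
    intro x y hxy
    have h0 : ((B * Φ)ᵀ * (B * Φ)).mulVec (x - y) = 0 := by
      rw [mulVec_sub, hxy, sub_self]
    have hk : (x - y) ∈ LinearMap.ker ((B * Φ)ᵀ * (B * Φ)).mulVecLin := h0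
    rw [Matrix.ker_mulVecLin_transpose_mul_self] at hk
    have hBΦ0 : B.mulVec (Φ.mulVec (x - y)) = 0 := by
      have h1 : (B * Φ).mulVec (x - y) = 0 := hk
      rwa [← mulVec_mulVec] at h1
    have hΦ0 : Φ.mulVec (x - y) = 0 := hB _ hBΦ0
    have hinj := Matrix.mulVec_injective_iff_isUnit.mpr hΦ
    have h2 : x - y = 0 :=
      hinj (by simpa [mulVec_zero] using hΦ0 : Φ.mulVec (x - y) = Φ.mulVec 0)
    exact sub_eq_zero.mp h2
  have hMdet : IsUnit (Φᵀ * Bᵀ * B * Φ).det := (Matrix.isUnit_iff_isUnit_det _).mp hM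
  -- rearranged flux equation
  have key : (B * Φ * Auσ).mulVec w + (B * Ψ).mulVec v = B.mulVec us - B.mulVec u := by
    rw [hflux]; abel
  have hBz : B.mulVec ((Φ * Auσ).mulVec w + (Ψ + 1).mulVec v) = 0 := by
    have expand : B.mulVec ((Φ * Auσ).mulVec w + (Ψ + 1).mulVec v) =
        (B * Φ * Auσ).mulVec w + (B * Ψ).mulVec v + (B.mulVec u - B.mulVec us) := by
      rw [mulVec_add, mulVec_mulVec, mulVec_mulVec, ← Matrix.mul_assoc, Matrix.mul_add,
        Matrix.mul_one, add_mulVec, show B *ᵥ v = B *ᵥ u - B *ᵥ us from by rw [hv, mulVec_sub]]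
      abel
    rw [expand, key]
    abel
  have hz : Φ.mulVec (Auσ.mulVec w) = -((Ψ + 1).mulVec v) := by
    have h2 := hB _ hBz
    rw [add_eq_zero_iff_eq_neg] at h2
    rw [mulVec_mulVec]
    exact h2
  have hA : Auσ.mulVec w = (Φ⁻¹).mulVec (-((Ψ + 1).mulVec v)) := by
    rw [← hz, mulVec_mulVec, Matrix.nonsing_inv_mul Φ hdet, one_mulVec]
  -- matrix identity: M⁻¹ ΦᵀBᵀB(Ψ+1) = Φ⁻¹(Ψ+1)
  have h3 : (Φᵀ * Bᵀ * B * Φ) * (Φ⁻¹ * (Ψ + 1)) = Φᵀ * Bᵀ * B * (Ψ + 1) := by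
    rw [Matrix.mul_assoc (Φᵀ * Bᵀ * B) Φ (Φ⁻¹ * (Ψ + 1)), ← Matrix.mul_assoc Φ Φ⁻¹ (Ψ + 1),
      Matrix.mul_nonsing_inv Φ hdet, one_mul]
  have hid : -((Φᵀ * Bᵀ * B * Φ)⁻¹ * (Φᵀ * Bᵀ * B * (Ψ + 1))) = -(Φ⁻¹ * (Ψ + 1)) := by
    rw [← h3, ← Matrix.mul_assoc, Matrix.nonsing_inv_mul _ hMdet, one_mul]
  have hfirst : Auσ.mulVec w + Auu.mulVec v =
      (-((Φᵀ * Bᵀ * B * Φ)⁻¹ * (Φᵀ * Bᵀ * B * (Ψ + 1))) + Auu).mulVec v := by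
    rw [add_mulVec, hid, neg_mulVec, ← mulVec_mulVec, ← mulVec_neg, ← hA]
  exact ⟨hfirst, fun C => by rw [add_assoc, hfirst]⟩
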